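/- If 0 < R < 2 and R ≠ R_n, then the configuration space M_n(R), as a topological subspace of ℝ^{2n+2}, is path-connected. -/

import Mathlib

/-- Euclidean norm of a vector in ℝ². -/
noncomputable def enorm2 (v : ℝ × ℝ) : ℝ := Real.sqrt (v.1 ^ 2 + v.2 ^ 2)

/-- The k-th fixed endpoint `B_k = (R cos(2kπ/n), R sin(2kπ/n))` (indices from 0). -/
noncomputable def Bpt (n : ℕ) (R : ℝ) (k : Fin n) : ℝ × ℝ :=
  (R * Real.cos (2 * (k.val : ℝ) * Real.pi / (n : ℝ)),
   R * Real.sin (2 * (k.val : ℝ) * Real.pi / (n : ℝ)))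

/-- The configuration space `M_n(R)` of spiders with `n` arms of radius `R`,
as a subset of `(ℝ²)^{n+1} ≅ ℝ^{2n+2}`: a pair `(C, J)` with
`|C − J_k| = 1` and `|J_k − B_k| = 1` for all `k`. -/
noncomputable def MSpace (n : ℕ) (R : ℝ) : Set ((ℝ × ℝ) × (Fin n → ℝ × ℝ)) :=
  {x | ∀ k : Fin n, enorm2 (x.1 - x.2 k) = 1 ∧ enorm2 (x.2 k - Bpt n R k) = 1}

/-- `d_n`, the maximum distance between `n`-th roots of unity. -/
noncomputable def dmax (n : ℕ) : ℝ :=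
  if Even n then 2
  else Real.sqrt (2 - 2 * Real.cos (2 * ((n / 2 : ℕ) : ℝ) * Real.pi / (n : ℝ)))

/-- The critical radius `R_n = 2 / d_n`. -/
noncomputable def Rcrit (n : ℕ) : ℝ := 2 / dmax n


namespace Complex

/-- the complex absolute value, as a bundled absolute value -/
noncomputable def abs : AbsoluteValue ℂ ℝ where
  toFun z := ‖z‖
  map_mul' := norm_mul
  nonneg' := norm_nonneg
  eq_zero' _ := norm_eq_zero
  add_le' := norm_add_le

lemma abs_apply (z : ℂ) : Complex.abs z = Real.sqrt (normSq z) := rfl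

lemma abs_def' (z : ℂ) : Complex.abs z = ‖z‖ := rfl

lemma sq_abs (z : ℂ) : Complex.abs z ^ 2 = normSq z := Complex.sq_norm z

lemma abs_exp_ofReal_mul_I (x : ℝ) : Complex.abs (exp (x * I)) = 1 := norm_exp_ofReal_mul_I x

lemma abs_ofReal (x : ℝ) : Complex.abs (x : ℂ) = |x| := by
  rw [abs_def', Complex.norm_real, Real.norm_eq_abs]

lemma abs_I : Complex.abs I = 1 := by rw [abs_def', Complex.norm_I]

lemma abs_conj (z : ℂ) : Complex.abs (starRingEnd ℂ z) = Complex.abs z := Complex.norm_conj z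

lemma abs_re_le_abs (z : ℂ) : |z.re| ≤ Complex.abs z := Complex.abs_re_le_norm z

lemma continuous_abs : Continuous (fun z : ℂ => Complex.abs z) := continuous_norm

lemma abs_mul_exp_arg_mul_I (z : ℂ) : ↑(Complex.abs z) * exp (↑(arg z) * I) = z :=
  Complex.norm_mul_exp_arg_mul_I z

lemma abs.ne_zero {z : ℂ} (h : z ≠ 0) : Complex.abs z ≠ 0 := Complex.abs.ne_zero_iff.mpr h

lemma abs.pos {z : ℂ} (h : z ≠ 0) : 0 < Complex.abs z := Complex.abs.pos_iff.mpr h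

@[simp]
lemma abs_zero' : Complex.abs 0 = 0 := Complex.abs.map_zero

end Complex

section SpiderProof
namespace Spider
open Complex

variable {n : ℕ} {R : ℝ}


/-- generic circle-intersection point: on line through `b` with direction `v` offset. -/
noncomputable def pt (b v : ℂ) (r ε : ℝ) : ℂ :=
  b + ((r/2 : ℝ) : ℂ) * v + ((ε * Real.sqrt (1 - r^2/4) : ℝ) : ℂ) * (Complex.I * v)

lemma abs_eq_one_iff {z : ℂ} : Complex.abs z = 1 ↔ z.re^2 + z.im^2 = 1 := by
  rw [Complex.abs_apply, Complex.normSq_apply, show z.re*z.re + z.im*z.im = z.re^2+z.im^2 by ring]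
  constructor
  · intro h; have := Real.sq_sqrt (by positivity : (0:ℝ) ≤ z.re^2+z.im^2); rw [h] at this; linarith
  · intro h; rw [h, Real.sqrt_one]

lemma pt_mem {b v : ℂ} {r ε : ℝ} (hv : Complex.abs v = 1) (hr : r^2 ≤ 4)
    (hε : ε = 1 ∨ ε = -1) :
    Complex.abs (b + (r:ℂ) * v - pt b v r ε) = 1 ∧ Complex.abs (pt b v r ε - b) = 1 := by
  have hh : (Real.sqrt (1 - r^2/4))^2 = 1 - r^2/4 := Real.sq_sqrt (by linarith)
  have hε2 : ε^2 = 1 := by rcases hε with h | h <;> rw [h] <;> ring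
  have h1 : b + (r:ℂ) * v - pt b v r ε
      = (((r/2 : ℝ) : ℂ) - ((ε * Real.sqrt (1 - r^2/4) : ℝ) : ℂ) * Complex.I) * v := by
    rw [pt]; push_cast; ring
  have h2 : pt b v r ε - b
      = (((r/2 : ℝ) : ℂ) + ((ε * Real.sqrt (1 - r^2/4) : ℝ) : ℂ) * Complex.I) * v := by
    rw [pt]; push_cast; ring
  constructor
  · rw [h1, map_mul, hv, mul_one, abs_eq_one_iff]
    simp [Complex.sub_re, Complex.sub_im]
    nlinarith [hh, hε2]
  · rw [h2, map_mul, hv, mul_one, abs_eq_one_iff]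
    simp [Complex.add_re, Complex.add_im]
    nlinarith [hh, hε2]

lemma pt_conv {b v c p : ℂ} {r : ℝ} (hv : Complex.abs v = 1) (hc : c = b + (r:ℂ) * v)
    (hr : r ≠ 0) (h1 : Complex.abs (c - p) = 1) (h2 : Complex.abs (p - b) = 1) :
    r^2 ≤ 4 ∧ ∃ ε : ℝ, (ε = 1 ∨ ε = -1) ∧ p = pt b v r ε := by
  have hvv : v * starRingEnd ℂ v = 1 := by
    rw [Complex.mul_conj]; norm_cast
    rw [← Complex.sq_abs, hv]; norm_num
  obtain ⟨w, hw⟩ : ∃ w : ℂ, w = (p - b) * starRingEnd ℂ v := ⟨_, rfl⟩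
  have hpb : p - b = w * v := by
    rw [hw]; rw [mul_assoc, mul_comm (starRingEnd ℂ v) v, hvv, mul_one]
  have hcp : c - p = ((r:ℂ) - w) * v := by
    rw [hc]; have : p = b + w * v := by rw [← hpb]; ring
    rw [this]; ring
  have e1 : Complex.abs ((r:ℂ) - w) = 1 := by
    rw [hcp, map_mul, hv, mul_one] at h1; exact h1
  have e2 : Complex.abs w = 1 := by rw [hpb, map_mul, hv, mul_one] at h2; exact h2
  rw [abs_eq_one_iff] at e1 e2
  simp [Complex.sub_re, Complex.sub_im] at e1
  have h0 : r * (r - 2*w.re) = 0 := by nlinarith [e1, e2]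
  have hre : w.re = r / 2 := by
    have := (mul_eq_zero.mp h0).resolve_left hr; linarith
  have him2 : w.im^2 = 1 - r^2/4 := by nlinarith [e1, e2]
  have hr4 : r^2 ≤ 4 := by nlinarith [sq_nonneg w.im]
  refine ⟨hr4, if w.im ≥ 0 then 1 else -1, by split <;> simp, ?_⟩
  have hsq : Real.sqrt (1 - r^2/4) = |w.im| := by
    rw [← him2, Real.sqrt_sq_eq_abs]
  have hwim : ((if w.im ≥ 0 then (1:ℝ) else -1) * Real.sqrt (1 - r^2/4)) = w.im := by
    rw [hsq]; split
    · rw [one_mul, _root_.abs_of_nonneg ‹_›]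
    · rw [neg_one_mul, _root_.abs_of_neg (by linarith [not_le.mp ‹¬ w.im ≥ 0›] : w.im < 0)]; ring
  obtain ⟨y, hy⟩ : ∃ y : ℝ, y = w.im := ⟨_, rfl⟩
  have hwexp : w = ((r/2 : ℝ) : ℂ) + (y : ℂ) * Complex.I := by
    rw [hy, ← hre]; exact (Complex.re_add_im w).symm
  have hp : p = b + w * v := by rw [← hpb]; ring
  rw [hp, pt, hwim, ← hy, hwexp]; push_cast; ring


variable {n : ℕ} {R : ℝ}

noncomputable def θk (n : ℕ) (k : Fin n) : ℝ := 2 * (k.val : ℝ) * Real.pi / (n : ℝ)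

noncomputable def ek (n : ℕ) (k : Fin n) : ℂ := Complex.exp ((θk n k : ℝ) * Complex.I)

noncomputable def bc (n : ℕ) (R : ℝ) (k : Fin n) : ℂ := (R : ℂ) * ek n k

noncomputable def MC (n : ℕ) (R : ℝ) : Set (ℂ × (Fin n → ℂ)) :=
  {x | ∀ k, Complex.abs (x.1 - x.2 k) = 1 ∧ Complex.abs (x.2 k - bc n R k) = 1}

lemma abs_ek (k : Fin n) : Complex.abs (ek n k) = 1 := Complex.abs_exp_ofReal_mul_I _

lemma abs_bc (hR0 : 0 ≤ R) (k : Fin n) : Complex.abs (bc n R k) = R := by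
  rw [bc, map_mul, abs_ek, mul_one, Complex.abs_ofReal, _root_.abs_of_nonneg hR0]

/-- injectivity of the `ek` -/
lemma ek_inj (hn : 2 ≤ n) {k j : Fin n} (h : ek n k = ek n j) : k = j := by
  rw [ek, ek, Complex.exp_eq_exp_iff_exists_int] at h
  obtain ⟨m, hm⟩ := h
  have him := congrArg Complex.im hm
  simp [Complex.add_im, Complex.mul_im] at him
  rw [θk, θk] at him
  have hπ := Real.pi_pos
  have hn0 : (n:ℝ) ≠ 0 := by positivity
  have : (2 * (k.val:ℝ) ) = 2 * (j.val:ℝ) + (m * 2 * n) := by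
    field_simp at him
    nlinarith [him]
  have hz : (2 * (k.val:ℤ)) = 2 * (j.val:ℤ) + m * 2 * n := by exact_mod_cast this
  have hmn : m * (n:ℤ) = (k.val:ℤ) - j.val := by linarith
  have hb1 : (k.val:ℤ) < n := by exact_mod_cast k.2
  have hb2 : (j.val:ℤ) < n := by exact_mod_cast j.2
  have hnz : (0:ℤ) ≤ n := by positivity
  have hm0 : m = 0 := by
    rcases lt_trichotomy m 0 with h | h | h
    · have := mul_le_mul_of_nonneg_right (show m ≤ -1 by omega) hnz
      simp at this; omega
    · exact h
    · have := mul_le_mul_of_nonneg_right (show 1 ≤ m by omega) hnz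
      simp at this; omega
  rw [hm0] at hmn
  have : k.val = j.val := by omega
  exact Fin.ext this

lemma ek_ne_neg_of_odd (hn : 2 ≤ n) (hodd : ¬ Even n) {k j : Fin n}
    (h : ek n j = - ek n k) : False := by
  rw [ek, ek, show -Complex.exp ((θk n k : ℝ) * Complex.I)
      = Complex.exp ((θk n k : ℝ) * Complex.I + Real.pi * Complex.I) by
    rw [Complex.exp_add, Complex.exp_pi_mul_I]; ring] at h
  rw [Complex.exp_eq_exp_iff_exists_int] at h
  obtain ⟨m, hm⟩ := h
  have him := congrArg Complex.im hm
  simp [Complex.add_im, Complex.mul_im] at him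
  rw [θk, θk] at him
  have hπ := Real.pi_pos
  have hn0 : (n:ℝ) ≠ 0 := by positivity
  have : (2 * (j.val:ℝ)) = 2 * (k.val:ℝ) + n + (m * 2 * n) := by
    field_simp at him
    nlinarith [him]
  have hz : (2 * (j.val:ℤ)) = 2 * (k.val:ℤ) + n + m * 2 * n := by exact_mod_cast this
  have he : Even ((n:ℤ)) := ⟨(j.val:ℤ) - k.val - m*n, by linarith⟩
  rw [Int.even_coe_nat] at he
  exact hodd he

/-- selection of circle intersection around moving center c -/
noncomputable def sel (n : ℕ) (R : ℝ) (c : ℂ) (ε : ℝ) (k : Fin n) : ℂ :=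
  pt (bc n R k) ((c - bc n R k) / (Complex.abs (c - bc n R k) : ℝ)) (Complex.abs (c - bc n R k)) ε

lemma sel_args {c : ℂ} {k : Fin n} (h : c ≠ bc n R k) :
    Complex.abs ((c - bc n R k) / (Complex.abs (c - bc n R k) : ℝ)) = 1 ∧
    c = bc n R k + ((Complex.abs (c - bc n R k) : ℝ) : ℂ) *
        ((c - bc n R k) / (Complex.abs (c - bc n R k) : ℝ)) := by
  have hne : c - bc n R k ≠ 0 := sub_ne_zero.mpr h
  have habs : Complex.abs (c - bc n R k) ≠ 0 := Complex.abs.ne_zero hne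
  have hC : ((Complex.abs (c - bc n R k) : ℝ) : ℂ) ≠ 0 := Complex.ofReal_ne_zero.mpr habs
  constructor
  · rw [map_div₀, Complex.abs_ofReal, _root_.abs_of_nonneg (Complex.abs.nonneg _)]
    field_simp
  · rw [show ((Complex.abs (c - bc n R k) : ℝ) : ℂ) * ((c - bc n R k) / ((Complex.abs (c - bc n R k) : ℝ) : ℂ)) = c - bc n R k from by field_simp]
    ring

lemma sel_mem {c : ℂ} {k : Fin n} {ε : ℝ} (h : c ≠ bc n R k)
    (h2 : Complex.abs (c - bc n R k) ≤ 2) (hε : ε = 1 ∨ ε = -1) :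
    Complex.abs (c - sel n R c ε k) = 1 ∧ Complex.abs (sel n R c ε k - bc n R k) = 1 := by
  obtain ⟨hv, hc⟩ := sel_args h
  have hr : (Complex.abs (c - bc n R k))^2 ≤ 4 := by
    nlinarith [Complex.abs.nonneg (c - bc n R k)]
  have hmem := pt_mem (b := bc n R k) hv hr hε
  simp only [sel]
  constructor
  · nth_rewrite 1 [hc]; exact hmem.1
  · exact hmem.2

lemma sel_conv {c p : ℂ} {k : Fin n} (h : c ≠ bc n R k)
    (h1 : Complex.abs (c - p) = 1) (h2 : Complex.abs (p - bc n R k) = 1) :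
    Complex.abs (c - bc n R k) ≤ 2 ∧ ∃ ε : ℝ, (ε = 1 ∨ ε = -1) ∧ p = sel n R c ε k := by
  obtain ⟨hv, hc⟩ := sel_args h
  have hne : c - bc n R k ≠ 0 := sub_ne_zero.mpr h
  have habs : Complex.abs (c - bc n R k) ≠ 0 := Complex.abs.ne_zero hne
  obtain ⟨hr4, ε, hε, hp⟩ := pt_conv hv hc habs h1 h2
  refine ⟨by nlinarith [Complex.abs.nonneg (c - bc n R k)], ε, hε, hp⟩

lemma continuous_sel {X : Type*} [TopologicalSpace X] {f : X → ℂ} (hf : Continuous f)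
    (k : Fin n) (ε : ℝ) (h : ∀ x, f x ≠ bc n R k) :
    Continuous fun x => sel n R (f x) ε k := by
  have hsub : Continuous fun x => f x - bc n R k := hf.sub continuous_const
  have habs : Continuous fun x => (Complex.abs (f x - bc n R k) : ℝ) :=
    Complex.continuous_abs.comp hsub
  have habsC : Continuous fun x => ((Complex.abs (f x - bc n R k) : ℝ) : ℂ) :=
    Complex.continuous_ofReal.comp habs
  have hne0 : ∀ x, ((Complex.abs (f x - bc n R k) : ℝ) : ℂ) ≠ 0 := by
    intro x
    exact Complex.ofReal_ne_zero.mpr (Complex.abs.ne_zero (sub_ne_zero.mpr (h x)))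
  have hv : Continuous fun x => (f x - bc n R k) / ((Complex.abs (f x - bc n R k) : ℝ) : ℂ) :=
    hsub.div habsC hne0
  unfold sel pt
  refine (continuous_const.add ?_).add ?_
  · exact (Complex.continuous_ofReal.comp (habs.div_const 2)).mul hv
  · refine (Complex.continuous_ofReal.comp (continuous_const.mul ?_)).mul
      (continuous_const.mul hv)
    exact Real.continuous_sqrt.comp (continuous_const.sub ((habs.pow 2).div_const 4))

lemma pt_two (b v : ℂ) (ε : ℝ) : pt b v 2 ε = b + v := by
  rw [pt]
  norm_num



variable {n : ℕ} {R : ℝ}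

lemma continuous_pt {X : Type} [TopologicalSpace X] (b v : ℂ) {r : X → ℝ} (ε : ℝ)
    (hr : Continuous r) : Continuous fun x => pt b v (r x) ε := by
  unfold pt
  refine (continuous_const.add ?_).add ?_
  · exact (Complex.continuous_ofReal.comp (hr.div_const 2)).mul continuous_const
  · refine (Complex.continuous_ofReal.comp (continuous_const.mul ?_)).mul continuous_const
    exact Real.continuous_sqrt.comp (continuous_const.sub ((hr.pow 2).div_const 4))

lemma seg_bound {a b z : ℂ} (ha : Complex.abs (a - z) ≤ 2) (hb : Complex.abs (b - z) ≤ 2)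
    {t : ℝ} (ht : t ∈ Set.Icc (0:ℝ) 1) : Complex.abs (a + (t:ℂ) * (b - a) - z) ≤ 2 := by
  have hid : a + (t:ℂ) * (b - a) - z = ((1 - t : ℝ) : ℂ) * (a - z) + (t : ℂ) * (b - z) := by
    push_cast; ring
  rw [hid]
  calc Complex.abs (((1 - t : ℝ) : ℂ) * (a - z) + (t : ℂ) * (b - z))
      ≤ Complex.abs (((1 - t : ℝ) : ℂ) * (a - z)) + Complex.abs ((t : ℂ) * (b - z)) :=
        Complex.abs.add_le _ _
    _ = (1 - t) * Complex.abs (a - z) + t * Complex.abs (b - z) := by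
        rw [map_mul, map_mul, Complex.abs_ofReal, Complex.abs_ofReal,
          _root_.abs_of_nonneg (by linarith [ht.2] : (0:ℝ) ≤ 1 - t),
          _root_.abs_of_nonneg ht.1]
    _ ≤ (1 - t) * 2 + t * 2 := by
        have h1 : (0:ℝ) ≤ 1 - t := by linarith [ht.2]
        nlinarith [ht.1, Complex.abs.nonneg (a-z), Complex.abs.nonneg (b-z)]
    _ = 2 := by ring

lemma joined_sel {γ : ℝ → ℂ} (hγ : Continuous γ)
    (h : ∀ t ∈ Set.Icc (0:ℝ) 1, ∀ k : Fin n, γ t ≠ bc n R k ∧ Complex.abs (γ t - bc n R k) ≤ 2)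
    {ε : Fin n → ℝ} (hε : ∀ k, ε k = 1 ∨ ε k = -1) :
    JoinedIn (MC n R) (γ 0, fun k => sel n R (γ 0) (ε k) k)
      (γ 1, fun k => sel n R (γ 1) (ε k) k) := by
  have hcont : Continuous fun t : unitInterval =>
      ((γ t, fun k => sel n R (γ (t:ℝ)) (ε k) k) : ℂ × (Fin n → ℂ)) := by
    refine Continuous.prodMk (hγ.comp continuous_subtype_val) (continuous_pi fun k => ?_)
    exact continuous_sel (hγ.comp continuous_subtype_val) k (ε k)
      (fun t => (h t t.2 k).1)
  refine ⟨⟨⟨fun t => (γ t, fun k => sel n R (γ (t:ℝ)) (ε k) k), hcont⟩, ?_, ?_⟩, ?_⟩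
  · norm_num
  · norm_num
  · intro t
    exact fun k => sel_mem (h t t.2 k).1 (h t t.2 k).2 (hε k)

lemma joined_rot {c : ℂ} {J : Fin n → ℂ} (hx : (c, J) ∈ MC n R) (k : Fin n)
    (hck : c = bc n R k) {z : ℂ} (hz : Complex.abs z = 1) :
    JoinedIn (MC n R) (c, J) (c, Function.update J k (bc n R k + z)) := by
  have hJk : Complex.abs (J k - bc n R k) = 1 := (hx k).2
  have hJk0 : J k - bc n R k ≠ 0 := by
    intro h0; rw [h0] at hJk; simp at hJk
  obtain ⟨θ, hθ⟩ : ∃ θ : ℝ, (J k - bc n R k) * Complex.exp ((θ : ℝ) * Complex.I) = z := by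
    refine ⟨(z / (J k - bc n R k)).arg, ?_⟩
    have habs : Complex.abs (z / (J k - bc n R k)) = 1 := by
      rw [map_div₀, hz, hJk]; norm_num
    have := Complex.abs_mul_exp_arg_mul_I (z / (J k - bc n R k))
    rw [habs] at this
    rw [show ((1:ℝ):ℂ) = 1 from rfl, one_mul] at this
    rw [this]
    field_simp
  have harm : ∀ (t : ℝ) (j : Fin n),
      (if j = k then bc n R k + (J k - bc n R k) * Complex.exp ((t * θ : ℝ) * Complex.I)
        else J j) - bc n R j ≠ 0 ∨ True := fun _ _ => Or.inr trivial
  have hmem : ∀ t : unitInterval, ((c, fun j => if j = k then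
      bc n R k + (J k - bc n R k) * Complex.exp ((((t:ℝ) * θ : ℝ)) * Complex.I) else J j) :
      ℂ × (Fin n → ℂ)) ∈ MC n R := by
    intro t j
    dsimp only
    by_cases hj : j = k
    · subst hj
      rw [if_pos rfl]
      have he : Complex.abs (Complex.exp ((((t:ℝ) * θ : ℝ)) * Complex.I)) = 1 :=
        Complex.abs_exp_ofReal_mul_I _
      constructor
      · rw [hck, show bc n R j - (bc n R j + (J j - bc n R j) *
            Complex.exp ((((t:ℝ) * θ : ℝ)) * Complex.I))
            = -((J j - bc n R j) * Complex.exp ((((t:ℝ) * θ : ℝ)) * Complex.I)) from by ring]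
        rw [map_neg_eq_map, map_mul, hJk, he, mul_one]
      · rw [show bc n R j + (J j - bc n R j) * Complex.exp ((((t:ℝ) * θ : ℝ)) * Complex.I)
            - bc n R j = (J j - bc n R j) * Complex.exp ((((t:ℝ) * θ : ℝ)) * Complex.I) from by ring]
        rw [map_mul, hJk, he, mul_one]
    · simp only [hj, ite_false]
      exact hx j
  refine ⟨⟨⟨fun t => (c, fun j => if j = k then
      bc n R k + (J k - bc n R k) * Complex.exp (((t:ℝ) * θ : ℝ) * Complex.I) else J j),
      ?_⟩, ?_, ?_⟩, fun t => hmem t⟩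
  · refine Continuous.prodMk continuous_const (continuous_pi fun j => ?_)
    by_cases hj : j = k
    · simp only [hj, if_pos]
      refine continuous_const.add (continuous_const.mul ?_)
      refine Complex.continuous_exp.comp ?_
      exact (Complex.continuous_ofReal.comp
        ((continuous_subtype_val).mul continuous_const)).mul continuous_const
    · simp only [hj, if_neg, ite_false]
      exact continuous_const
  · simp only [Prod.mk.injEq, true_and]
    funext j
    by_cases hj : j = k
    · simp [hj]
    · simp [hj]
  · simp only [Prod.mk.injEq, true_and]
    funext j
    by_cases hj : j = k
    · subst hj; simp only [if_pos, Function.update_self]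
      rw [show ((1 : unitInterval) : ℝ) * θ = θ by norm_num, hθ]
    · simp [hj, Function.update_of_ne hj]



variable {n : ℕ} {R : ℝ}

lemma joined_seg {c₀ c₁ : ℂ}
    (hA : ∀ j : Fin n, Complex.abs (c₀ - bc n R j) ≤ 2 ∧ Complex.abs (c₁ - bc n R j) ≤ 2)
    {J : Fin n → ℂ} (hx : (c₀, J) ∈ MC n R)
    (hdeg : ∀ j, c₀ = bc n R j →
      J j = bc n R j + Complex.I * ((c₁ - c₀) / ((Complex.abs (c₁ - c₀) : ℝ) : ℂ)) ∨
      J j = bc n R j - Complex.I * ((c₁ - c₀) / ((Complex.abs (c₁ - c₀) : ℝ) : ℂ))) :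
    ∃ J₁, JoinedIn (MC n R) (c₀, J) (c₁, J₁) := by
  by_cases hcc : c₀ = c₁
  · exact ⟨J, by rw [← hcc]; exact JoinedIn.refl hx⟩
  have hw0 : c₁ - c₀ ≠ 0 := sub_ne_zero.mpr (Ne.symm hcc)
  have hL0 : Complex.abs (c₁ - c₀) ≠ 0 := Complex.abs.ne_zero hw0
  have hLpos : 0 < Complex.abs (c₁ - c₀) := Complex.abs.pos hw0
  have hLC : ((Complex.abs (c₁ - c₀) : ℝ) : ℂ) ≠ 0 := Complex.ofReal_ne_zero.mpr hL0
  have hv : Complex.abs ((c₁ - c₀) / ((Complex.abs (c₁ - c₀) : ℝ) : ℂ)) = 1 := by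
    rw [map_div₀, Complex.abs_ofReal, _root_.abs_of_nonneg (Complex.abs.nonneg _)]
    field_simp
  have key : ∀ j : Fin n, ∃ A : ℝ → ℂ, Continuous A ∧ A 0 = J j ∧
      ∀ t ∈ Set.Icc (0:ℝ) 1,
        Complex.abs ((c₀ + (t:ℂ) * (c₁ - c₀)) - A t) = 1 ∧
        Complex.abs (A t - bc n R j) = 1 := by
    intro j
    have hseg : ∀ t ∈ Set.Icc (0:ℝ) 1,
        Complex.abs (c₀ + (t:ℂ) * (c₁ - c₀) - bc n R j) ≤ 2 :=
      fun t ht => seg_bound (hA j).1 (hA j).2 ht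
    by_cases hline : ∃ s : ℝ, bc n R j = c₀ + (s:ℂ) * (c₁ - c₀)
    · obtain ⟨s, hs⟩ := hline
      have hcb : ∀ t : ℝ, c₀ + (t:ℂ) * (c₁ - c₀) - bc n R j
          = ((((t - s) * Complex.abs (c₁ - c₀)) : ℝ) : ℂ) *
            ((c₁ - c₀) / ((Complex.abs (c₁ - c₀) : ℝ) : ℂ)) := by
        intro t; rw [hs]; push_cast; field_simp; ring
      have hrbd : ∀ t ∈ Set.Icc (0:ℝ) 1, ((t - s) * Complex.abs (c₁ - c₀))^2 ≤ 4 := by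
        intro t ht
        have h1 := hseg t ht
        rw [hcb t, map_mul, hv, mul_one, Complex.abs_ofReal] at h1
        nlinarith [abs_nonneg ((t - s) * Complex.abs (c₁ - c₀)),
          le_abs_self ((t - s) * Complex.abs (c₁ - c₀)),
          neg_abs_le ((t - s) * Complex.abs (c₁ - c₀))]
      have hcbt : ∀ t : ℝ, c₀ + (t:ℂ) * (c₁ - c₀)
          = bc n R j + ((((t - s) * Complex.abs (c₁ - c₀)) : ℝ) : ℂ) *
            ((c₁ - c₀) / ((Complex.abs (c₁ - c₀) : ℝ) : ℂ)) := by
        intro t; rw [← hcb t]; ring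
      have hεex : ∃ ε : ℝ, (ε = 1 ∨ ε = -1) ∧
          J j = pt (bc n R j) ((c₁ - c₀) / ((Complex.abs (c₁ - c₀) : ℝ) : ℂ))
            ((0 - s) * Complex.abs (c₁ - c₀)) ε := by
        by_cases hc0 : c₀ = bc n R j
        · have hs0 : s = 0 := by
            have : (s:ℂ) * (c₁ - c₀) = 0 := by
              have := hs; rw [← hc0] at this; linear_combination -this
            rcases mul_eq_zero.mp this with h | h
            · exact_mod_cast h
            · exact absurd h hw0
          have hr0 : (0 - s) * Complex.abs (c₁ - c₀) = 0 := by rw [hs0]; ring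
          rcases hdeg j hc0 with h | h
          · refine ⟨1, Or.inl rfl, ?_⟩
            rw [h, pt, hr0]; norm_num
          · refine ⟨-1, Or.inr rfl, ?_⟩
            rw [h, pt, hr0]; push_cast; norm_num; ring
        · have hr00 : (0 - s) * Complex.abs (c₁ - c₀) ≠ 0 := by
            intro h0
            rcases mul_eq_zero.mp h0 with h | h
            · have : s = 0 := by linarith
              rw [this] at hs; simp at hs; exact hc0 hs.symm
            · exact hL0 h
          have hc00 : c₀ = bc n R j + ((((0 - s) * Complex.abs (c₁ - c₀)) : ℝ) : ℂ) *
              ((c₁ - c₀) / ((Complex.abs (c₁ - c₀) : ℝ) : ℂ)) := by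
            have h0 := hcbt 0
            rw [Complex.ofReal_zero, zero_mul, add_zero] at h0
            exact h0
          obtain ⟨_, ε, hε, hp⟩ := pt_conv hv hc00 hr00 (hx j).1 (hx j).2
          exact ⟨ε, hε, hp⟩
      obtain ⟨ε, hε, hp⟩ := hεex
      refine ⟨fun t => pt (bc n R j) ((c₁ - c₀) / ((Complex.abs (c₁ - c₀) : ℝ) : ℂ))
        ((t - s) * Complex.abs (c₁ - c₀)) ε, ?_, ?_, ?_⟩
      · exact continuous_pt _ _ ε ((continuous_id.sub continuous_const).mul continuous_const)
      · exact hp.symm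
      · intro t ht
        have hm := pt_mem (b := bc n R j) hv (hrbd t ht) hε
        constructor
        · rw [hcbt t]; exact hm.1
        · exact hm.2
    · push_neg at hline
      have hnb : ∀ t : ℝ, c₀ + (t:ℂ) * (c₁ - c₀) ≠ bc n R j := by
        intro t h; exact hline t h.symm
      have hc0b : c₀ ≠ bc n R j := by
        intro h; apply hline 0; rw [← h]; norm_num
      obtain ⟨_, ε, hε, hp⟩ := sel_conv hc0b (hx j).1 (hx j).2
      refine ⟨fun t => sel n R (c₀ + (t:ℂ) * (c₁ - c₀)) ε j, ?_, ?_, ?_⟩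
      · exact continuous_sel (continuous_const.add
          ((Complex.continuous_ofReal).mul continuous_const)) j ε
          (fun t => hnb t)
      · simp only [Complex.ofReal_zero, zero_mul, add_zero]; exact hp.symm
      · intro t ht
        exact sel_mem (hnb t) (hseg t ht) hε
  choose A hAc hA0 hAm using key
  refine ⟨fun j => A j 1, ?_⟩
  have hmem : ∀ t : unitInterval,
      ((c₀ + ((t:ℝ):ℂ) * (c₁ - c₀), fun j => A j (t:ℝ)) : ℂ × (Fin n → ℂ)) ∈ MC n R := by
    intro t j
    dsimp only
    exact hAm j t t.2
  refine ⟨⟨⟨fun t => (c₀ + ((t:ℝ):ℂ) * (c₁ - c₀), fun j => A j (t:ℝ)), ?_⟩, ?_, ?_⟩,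
    fun t => hmem t⟩
  · refine Continuous.prodMk ?_ (continuous_pi fun j => (hAc j).comp continuous_subtype_val)
    exact continuous_const.add ((Complex.continuous_ofReal.comp continuous_subtype_val).mul
      continuous_const)
  · have : ((0 : unitInterval) : ℝ) = 0 := rfl
    rw [Prod.mk.injEq]
    constructor
    · norm_num
    · funext j; rw [this]; exact hA0 j
  · have : ((1 : unitInterval) : ℝ) = 1 := rfl
    rw [Prod.mk.injEq]
    constructor
    · rw [this]; push_cast; ring
    · funext j; rw [this]



variable {n : ℕ} {R : ℝ}

lemma pt_zero (b v : ℂ) (ε : ℝ) : pt b v 0 ε = b + (ε:ℂ) * (Complex.I * v) := by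
  rw [pt]; norm_num

lemma bc_inj (hn : 2 ≤ n) (hR0 : 0 < R) {k j : Fin n} (h : bc n R k = bc n R j) : k = j := by
  have hR : ((R:ℝ):ℂ) ≠ 0 := Complex.ofReal_ne_zero.mpr (ne_of_gt hR0)
  exact ek_inj hn (mul_left_cancel₀ hR h)

lemma bc_ne_zero (hR0 : 0 < R) (k : Fin n) : bc n R k ≠ 0 := by
  intro h
  have := abs_bc (le_of_lt hR0) k
  rw [h] at this; simp at this; exact absurd this.symm (ne_of_gt hR0)

lemma sel_zero (hR0 : 0 < R) (k : Fin n) (ε : ℝ) :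
    sel n R 0 ε k = pt (bc n R k) (-(ek n k)) R ε := by
  have h1 : Complex.abs (0 - bc n R k) = R := by
    rw [zero_sub, map_neg_eq_map, abs_bc (le_of_lt hR0)]
  rw [sel, h1]
  congr 1
  rw [zero_sub, bc]
  have hR : ((R:ℝ):ℂ) ≠ 0 := Complex.ofReal_ne_zero.mpr (ne_of_gt hR0)
  field_simp

/-- sel with |c-b|=2 does not depend on the sign -/
lemma sel_two {c : ℂ} {k : Fin n} (h : Complex.abs (c - bc n R k) = 2) (ε ε' : ℝ) :
    sel n R c ε k = sel n R c ε' k := by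
  rw [sel, sel, h, pt_two, pt_two]

/-- square norm of a combination of two unit vectors -/
lemma abs_sq_comb (a b : ℝ) {u w : ℂ} (hu : Complex.abs u = 1) (hw : Complex.abs w = 1) :
    (Complex.abs ((a:ℂ)*u - (b:ℂ)*w))^2
      = a^2 + b^2 - 2*a*b*(u * (starRingEnd ℂ) w).re := by
  have hu2 := abs_eq_one_iff.mp hu
  have hw2 := abs_eq_one_iff.mp hw
  rw [Complex.sq_abs]
  simp only [Complex.normSq_apply, Complex.sub_re, Complex.sub_im, Complex.mul_re,
    Complex.mul_im, Complex.conj_re, Complex.conj_im, Complex.ofReal_re, Complex.ofReal_im]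
  nlinarith [hu2, hw2]

lemma re_le_one {u w : ℂ} (hu : Complex.abs u = 1) (hw : Complex.abs w = 1) :
    (u * (starRingEnd ℂ) w).re ≤ 1 ∧ -1 ≤ (u * (starRingEnd ℂ) w).re := by
  have h1 : Complex.abs (u * (starRingEnd ℂ) w) = 1 := by
    rw [map_mul, hu, Complex.abs_conj, hw, mul_one]
  have h2 := Complex.abs_re_le_abs (u * (starRingEnd ℂ) w)
  rw [h1] at h2
  constructor <;> [exact le_trans (le_abs_self _) h2;
    exact neg_le_of_abs_le h2]

lemma abs_le_two_of_sq {z : ℂ} (h : (Complex.abs z)^2 ≤ 4) : Complex.abs z ≤ 2 := by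
  nlinarith [Complex.abs.nonneg z]

/-- the P-flip : valid whenever 1 < R (< 2) -/
lemma flip_P (hn : 2 ≤ n) (hR1 : 1 < R) (hR2 : R < 2)
    {ε : Fin n → ℝ} (hε : ∀ k, ε k = 1 ∨ ε k = -1) (k : Fin n) :
    JoinedIn (MC n R) (0, fun j => sel n R 0 (ε j) j)
      (0, fun j => sel n R 0 (Function.update ε k (-(ε k)) j) j) := by
  have hR0 : 0 < R := by linarith
  set p : ℂ := ((R:ℝ) - 2 : ℝ) * ek n k with hp
  have hcond : ∀ t ∈ Set.Icc (0:ℝ) 1, ∀ j : Fin n,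
      (fun t : ℝ => ((t:ℝ):ℂ) * p) t ≠ bc n R j ∧
      Complex.abs ((fun t : ℝ => ((t:ℝ):ℂ) * p) t - bc n R j) ≤ 2 := by
    intro t ht j
    have habsq : (Complex.abs (((t:ℝ):ℂ) * p - bc n R j))^2
        = (t*(R-2))^2 + R^2 - 2*(t*(R-2))*R*((ek n k) * (starRingEnd ℂ) (ek n j)).re := by
      have : ((t:ℝ):ℂ) * p - bc n R j
          = ((t*(R-2) : ℝ):ℂ) * ek n k - ((R:ℝ):ℂ) * ek n j := by
        rw [hp, bc]; push_cast; ring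
      rw [this, abs_sq_comb _ _ (abs_ek k) (abs_ek j)]
    have hC := re_le_one (abs_ek (n := n) k) (abs_ek (n := n) j)
    constructor
    · intro heq
      have heq2 : ((t:ℝ):ℂ) * p = bc n R j := heq
      have h0 : Complex.abs (((t:ℝ):ℂ) * p - bc n R j) = 0 := by
        rw [sub_eq_zero.mpr heq2]; simp
      have h00 : (t*(R-2))^2 + R^2
          - 2*(t*(R-2))*R*((ek n k) * (starRingEnd ℂ) (ek n j)).re = 0 := by
        rw [← habsq, h0]; norm_num
      have ha : 0 ≤ -(t*(R-2)) := by nlinarith [ht.1]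
      have h3 : 0 ≤ -(t*(R-2)) * R * (((ek n k) * (starRingEnd ℂ) (ek n j)).re + 1) :=
        mul_nonneg (mul_nonneg ha hR0.le) (by linarith [hC.2])
      have h4 : 2*R - 2 ≤ R + t*(R-2) := by nlinarith [ht.2]
      have h5 : 0 < R + t*(R-2) := by linarith
      nlinarith [h00, h3, mul_pos h5 h5]
    · apply abs_le_two_of_sq
      rw [habsq]
      have hq : (0:ℝ) ≤ t*(2-R) := mul_nonneg ht.1 (by linarith)
      nlinarith [ht.1, ht.2, hC.1, hC.2, hq,
        mul_nonneg (mul_nonneg ht.1 (by linarith : (0:ℝ) ≤ 2 - R)) hR0.le,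
        mul_nonneg (mul_nonneg (mul_nonneg ht.1 (by linarith : (0:ℝ) ≤ 2 - R)) hR0.le)
          (by linarith [hC.1] : (0:ℝ) ≤ 1 - ((ek n k) * (starRingEnd ℂ) (ek n j)).re),
        mul_nonneg (mul_nonneg (sub_nonneg.mpr ht.2) (by linarith : (0:ℝ) ≤ 2 - R))
          (by linarith : (0:ℝ) ≤ 2 + t*(2-R) + R)]
  have h1 := joined_sel (γ := fun t : ℝ => ((t:ℝ):ℂ) * p)
    (Complex.continuous_ofReal.mul continuous_const) hcond hε
  have h2 := joined_sel (γ := fun t : ℝ => ((t:ℝ):ℂ) * p)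
    (Complex.continuous_ofReal.mul continuous_const) hcond
    (ε := Function.update ε k (-(ε k)))
    (fun j => by
      by_cases hj : j = k
      · subst hj; rw [Function.update_self]; rcases hε j with h | h <;> simp [h]
      · rw [Function.update_of_ne hj]; exact hε j)
  simp only [Complex.ofReal_zero, zero_mul, Complex.ofReal_one, one_mul] at h1 h2
  have habs2 : Complex.abs (p - bc n R k) = 2 := by
    have : p - bc n R k = ((-2 : ℝ):ℂ) * ek n k := by rw [hp, bc]; push_cast; ring
    rw [this, map_mul, abs_ek, mul_one, Complex.abs_ofReal]
    norm_num
  have hmid : (fun j => sel n R p (ε j) j)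
      = fun j => sel n R p (Function.update ε k (-(ε k)) j) j := by
    funext j
    by_cases hj : j = k
    · subst hj; exact sel_two habs2 _ _
    · rw [Function.update_of_ne hj]
  exact h1.trans (by rw [hmid]; exact h2.symm)

lemma abs_sub_le' (x y : ℂ) : Complex.abs (x - y) ≤ Complex.abs x + Complex.abs y := by
  simpa [sub_eq_add_neg] using Complex.abs.add_le x (-y)

/-- the B-flip : valid whenever R ≤ 1 -/
lemma flip_B (hn : 2 ≤ n) (hR0 : 0 < R) (hR1 : R ≤ 1)
    {ε : Fin n → ℝ} (hε : ∀ k, ε k = 1 ∨ ε k = -1) (k : Fin n) :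
    JoinedIn (MC n R) (0, fun j => sel n R 0 (ε j) j)
      (0, fun j => sel n R 0 (Function.update ε k (-(ε k)) j) j) := by
  have hRC : ((R:ℝ):ℂ) ≠ 0 := Complex.ofReal_ne_zero.mpr (ne_of_gt hR0)
  -- basic facts along the segment t ↦ t • b_k
  have hne : ∀ t : ℝ, t ∈ Set.Icc (0:ℝ) 1 → ∀ j : Fin n, j ≠ k →
      ((t:ℝ):ℂ) * bc n R k ≠ bc n R j := by
    intro t ht j hj heq
    have habs := congrArg Complex.abs heq
    rw [map_mul, abs_bc hR0.le, abs_bc hR0.le, Complex.abs_ofReal,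
      _root_.abs_of_nonneg ht.1] at habs
    have ht1 : t = 1 := by
      have := mul_right_cancel₀ (ne_of_gt hR0) (habs.trans (one_mul R).symm)
      linarith
    rw [ht1] at heq
    simp only [Complex.ofReal_one, one_mul] at heq
    exact hj (bc_inj hn hR0 heq).symm
  have hbd : ∀ t : ℝ, t ∈ Set.Icc (0:ℝ) 1 → ∀ j : Fin n,
      Complex.abs (((t:ℝ):ℂ) * bc n R k - bc n R j) ≤ 2 := by
    intro t ht j
    calc Complex.abs (((t:ℝ):ℂ) * bc n R k - bc n R j)
        ≤ Complex.abs (((t:ℝ):ℂ) * bc n R k) + Complex.abs (bc n R j) := abs_sub_le' _ _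
      _ ≤ 2 := by
          rw [map_mul, abs_bc hR0.le, abs_bc hR0.le, Complex.abs_ofReal,
            _root_.abs_of_nonneg ht.1]
          nlinarith [ht.1, ht.2]
  -- the one-parameter family for the leg 0 → b_k with sign vector ε
  have main : ∀ (ε : Fin n → ℝ), (∀ k, ε k = 1 ∨ ε k = -1) →
      JoinedIn (MC n R) (0, fun j => sel n R 0 (ε j) j)
        (bc n R k, fun j => if j = k then pt (bc n R k) (-(ek n k)) 0 (ε k)
          else sel n R (bc n R k) (ε j) j) := by
    intro ε hε
    have hmem : ∀ t : unitInterval,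
        ((((t:ℝ):ℂ) * bc n R k, fun j => if j = k then
            pt (bc n R k) (-(ek n k)) ((1-(t:ℝ))*R) (ε k)
          else sel n R (((t:ℝ):ℂ) * bc n R k) (ε j) j) : ℂ × (Fin n → ℂ)) ∈ MC n R := by
      intro t j
      dsimp only
      by_cases hj : j = k
      · subst hj
        rw [if_pos rfl]
        have hc : ((t:ℝ):ℂ) * bc n R j = bc n R j + (((1-(t:ℝ))*R : ℝ):ℂ) * (-(ek n j)) := by
          rw [bc]; push_cast; ring
        have hv : Complex.abs (-(ek n j)) = 1 := by rw [map_neg_eq_map, abs_ek]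
        have hr : ((1-(t:ℝ))*R)^2 ≤ 4 := by
          have h6 : (1-(t:ℝ))*R ≤ 1 := mul_le_one₀ (by linarith [t.2.1]) hR0.le hR1
          have h7 : 0 ≤ (1-(t:ℝ))*R := mul_nonneg (by linarith [t.2.2]) hR0.le
          nlinarith [h6, h7]
        have hm := pt_mem (b := bc n R j) hv hr (hε j)
        exact ⟨by rw [hc]; exact hm.1, hm.2⟩
      · rw [if_neg hj]
        exact sel_mem (hne t t.2 j hj) (hbd t t.2 j) (hε j)
    have hKcont : Continuous fun t : unitInterval =>
        ((((t:ℝ):ℂ) * bc n R k, fun j => if j = k then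
            pt (bc n R k) (-(ek n k)) ((1-(t:ℝ))*R) (ε k)
          else sel n R (((t:ℝ):ℂ) * bc n R k) (ε j) j) : ℂ × (Fin n → ℂ)) := by
      refine Continuous.prodMk ((Complex.continuous_ofReal.comp
        continuous_subtype_val).mul continuous_const) (continuous_pi fun j => ?_)
      by_cases hj : j = k
      · simp only [hj, if_pos]
        exact continuous_pt _ _ _ ((continuous_const.sub
          (continuous_subtype_val)).mul continuous_const)
      · simp only [hj, ite_false]
        exact continuous_sel ((Complex.continuous_ofReal.comp
          continuous_subtype_val).mul continuous_const) j (ε j)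
          (fun t => hne t t.2 j hj)
    have hstart : ((((0:ℝ):ℂ) * bc n R k, fun j => if j = k then
        pt (bc n R k) (-(ek n k)) ((1-(0:ℝ))*R) (ε k)
      else sel n R (((0:ℝ):ℂ) * bc n R k) (ε j) j) : ℂ × (Fin n → ℂ))
        = (0, fun j => sel n R 0 (ε j) j) := by
      rw [Prod.mk.injEq]
      refine ⟨by norm_num, funext fun j => ?_⟩
      by_cases hj : j = k
      · subst hj; rw [if_pos rfl, sel_zero hR0]; norm_num
      · rw [if_neg hj]; norm_num
    have hend : ((((1:ℝ):ℂ) * bc n R k, fun j => if j = k then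
        pt (bc n R k) (-(ek n k)) ((1-(1:ℝ))*R) (ε k)
      else sel n R (((1:ℝ):ℂ) * bc n R k) (ε j) j) : ℂ × (Fin n → ℂ))
        = (bc n R k, fun j => if j = k then pt (bc n R k) (-(ek n k)) 0 (ε k)
          else sel n R (bc n R k) (ε j) j) := by
      rw [Prod.mk.injEq]
      refine ⟨by norm_num, funext fun j => ?_⟩
      by_cases hj : j = k
      · subst hj; rw [if_pos rfl, if_pos rfl]; norm_num
      · rw [if_neg hj, if_neg hj]; norm_num
    exact ⟨⟨⟨fun t => ((((t:ℝ):ℂ) * bc n R k, fun j => if j = k then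
        pt (bc n R k) (-(ek n k)) ((1-(t:ℝ))*R) (ε k)
      else sel n R (((t:ℝ):ℂ) * bc n R k) (ε j) j) : ℂ × (Fin n → ℂ)), hKcont⟩,
      hstart, hend⟩, fun t => hmem t⟩
  have hε' : ∀ j, Function.update ε k (-(ε k)) j = 1 ∨ Function.update ε k (-(ε k)) j = -1 := by
    intro j
    by_cases hj : j = k
    · subst hj; rw [Function.update_self]; rcases hε j with h | h <;> simp [h]
    · rw [Function.update_of_ne hj]; exact hε j
  have leg1 := main ε hε
  have leg3 := main (Function.update ε k (-(ε k))) hε'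
  -- rotation leg at c = b_k
  have hJm := leg1.target_mem
  have hz : Complex.abs (-(((ε k):ℝ):ℂ) * (Complex.I * (-(ek n k)))) = 1 := by
    rw [map_mul, map_mul, map_neg_eq_map, map_neg_eq_map, Complex.abs_ofReal, Complex.abs_I,
      abs_ek]
    rcases hε k with h | h <;> rw [h] <;> norm_num
  have leg2 := joined_rot hJm k rfl hz
  have hupd : Function.update (fun j => if j = k then pt (bc n R k) (-(ek n k)) 0 (ε k)
      else sel n R (bc n R k) (ε j) j) k
      (bc n R k + -(((ε k):ℝ):ℂ) * (Complex.I * (-(ek n k))))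
      = fun j => if j = k then pt (bc n R k) (-(ek n k)) 0 (Function.update ε k (-(ε k)) k)
        else sel n R (bc n R k) (Function.update ε k (-(ε k)) j) j := by
    funext j
    by_cases hj : j = k
    · subst hj
      rw [Function.update_self, if_pos rfl, Function.update_self, pt_zero]
      push_cast; ring
    · rw [Function.update_of_ne hj, if_neg hj, if_neg hj, Function.update_of_ne hj]
  rw [hupd] at leg2
  exact (leg1.trans leg2).trans leg3.symm

lemma base_mem (hR0 : 0 < R) (hR2 : R < 2) {ε : Fin n → ℝ} (hε : ∀ k, ε k = 1 ∨ ε k = -1) :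
    (((0:ℂ), fun j => sel n R 0 (ε j) j) : ℂ × (Fin n → ℂ)) ∈ MC n R := by
  intro j
  refine sel_mem (fun h => bc_ne_zero hR0 j h.symm) ?_ (hε j)
  rw [zero_sub, map_neg_eq_map, abs_bc hR0.le]
  linarith

lemma chain (hn : 2 ≤ n) (hR0 : 0 < R) (hR2 : R < 2)
    (hflip : ∀ (ε : Fin n → ℝ), (∀ k, ε k = 1 ∨ ε k = -1) → ∀ k : Fin n,
      JoinedIn (MC n R) (0, fun j => sel n R 0 (ε j) j)
        (0, fun j => sel n R 0 (Function.update ε k (-(ε k)) j) j)) :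
    ∀ (S : Finset (Fin n)) (ε : Fin n → ℝ), (∀ k, ε k = 1 ∨ ε k = -1) →
      (∀ k ∉ S, ε k = 1) →
      JoinedIn (MC n R) (0, fun j => sel n R 0 (ε j) j) (0, fun j => sel n R 0 1 j) := by
  intro S
  induction S using Finset.induction_on with
  | empty =>
    intro ε hε h
    have hε1 : ε = fun _ => 1 := funext fun k => h k (Finset.notMem_empty k)
    subst hε1
    exact JoinedIn.refl (base_mem hR0 hR2 (fun _ => Or.inl rfl))
  | @insert a S ha IH =>
    intro ε hε h
    by_cases hea : ε a = 1
    · refine IH ε hε (fun k hk => ?_)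
      by_cases hka : k = a
      · rw [hka]; exact hea
      · exact h k (by simp [Finset.mem_insert, hka, hk])
    · have hea' : ε a = -1 := (hε a).resolve_left hea
      have hε' : ∀ k, Function.update ε a (-(ε a)) k = 1 ∨
          Function.update ε a (-(ε a)) k = -1 := by
        intro k
        by_cases hk : k = a
        · subst hk; rw [Function.update_self, hea']; norm_num
        · rw [Function.update_of_ne hk]; exact hε k
      refine (hflip ε hε a).trans (IH _ hε' (fun k hk => ?_))
      by_cases hka : k = a
      · subst hka; rw [Function.update_self, hea']; norm_num
      · rw [Function.update_of_ne hka]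
        exact h k (by simp [Finset.mem_insert, hka, hk])

lemma reduce (hn : 2 ≤ n) (hR0 : 0 < R) (hR2 : R < 2) {x : ℂ × (Fin n → ℂ)}
    (hx : x ∈ MC n R) :
    ∃ ε : Fin n → ℝ, (∀ k, ε k = 1 ∨ ε k = -1) ∧
      JoinedIn (MC n R) x (0, fun j => sel n R 0 (ε j) j) := by
  obtain ⟨c, J⟩ := x
  have hA : ∀ j : Fin n, Complex.abs (c - bc n R j) ≤ 2 := by
    intro j
    calc Complex.abs (c - bc n R j)
        ≤ Complex.abs (c - J j) + Complex.abs (J j - bc n R j) :=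
          Complex.abs.sub_le c (J j) (bc n R j)
      _ = 2 := by rw [(hx j).1, (hx j).2]; norm_num
  have hA0 : ∀ j : Fin n, Complex.abs ((0:ℂ) - bc n R j) ≤ 2 := by
    intro j
    rw [zero_sub, map_neg_eq_map, abs_bc hR0.le]
    linarith
  have hzne : ∀ j : Fin n, (0:ℂ) ≠ bc n R j := fun j h => bc_ne_zero hR0 j h.symm
  by_cases hC0 : c = 0
  · subst hC0
    choose ε hε using fun j => (sel_conv (hzne j) (hx j).1 (hx j).2).2
    refine ⟨ε, fun j => (hε j).1, ?_⟩
    have hxeq : (((0:ℂ), J) : ℂ × (Fin n → ℂ)) = (0, fun j => sel n R 0 (ε j) j) := by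
      rw [Prod.mk.injEq]
      exact ⟨rfl, funext fun j => (hε j).2⟩
    rw [hxeq]
    exact JoinedIn.refl (base_mem hR0 hR2 (fun j => (hε j).1))
  · have hfinish : ∀ (J' : Fin n → ℂ), JoinedIn (MC n R) (c, J') (0, J') →
        ∀ J₁ : Fin n → ℂ, JoinedIn (MC n R) (c, J') ((0:ℂ), J₁) →
        True := fun _ _ _ _ => trivial
    by_cases hdegc : ∃ j₀ : Fin n, c = bc n R j₀
    · obtain ⟨j₀, hj₀⟩ := hdegc
      have hvne : (0:ℂ) - c ≠ 0 := by
        intro h; apply hC0; linear_combination -h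
      have hz1 : Complex.abs (Complex.I *
          (((0:ℂ) - c) / ((Complex.abs ((0:ℂ) - c) : ℝ) : ℂ))) = 1 := by
        rw [map_mul, Complex.abs_I, one_mul, map_div₀, Complex.abs_ofReal,
          _root_.abs_of_nonneg (Complex.abs.nonneg _)]
        field_simp [Complex.abs.ne_zero hvne]
        exact div_self (Complex.abs.ne_zero hvne)
      have leg0 := joined_rot hx j₀ hj₀ hz1
      have hx' := leg0.target_mem
      obtain ⟨J₁, hJ1⟩ := joined_seg (c₀ := c) (c₁ := 0)
        (fun j => ⟨hA j, hA0 j⟩) hx' (by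
          intro j hj
          have hjj : j = j₀ := bc_inj hn hR0 (hj.symm.trans hj₀)
          subst hjj
          left
          rw [Function.update_self])
      have hx1 := hJ1.target_mem
      choose ε hε using fun j => (sel_conv (hzne j) (hx1 j).1 (hx1 j).2).2
      refine ⟨ε, fun j => (hε j).1, ?_⟩
      have hxeq : (((0:ℂ), J₁) : ℂ × (Fin n → ℂ)) = (0, fun j => sel n R 0 (ε j) j) := by
        rw [Prod.mk.injEq]
        exact ⟨rfl, funext fun j => (hε j).2⟩
      rw [← hxeq]
      exact leg0.trans hJ1
    · push_neg at hdegc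
      obtain ⟨J₁, hJ1⟩ := joined_seg (c₀ := c) (c₁ := 0)
        (fun j => ⟨hA j, hA0 j⟩) hx (fun j hj => absurd hj (hdegc j))
      have hx1 := hJ1.target_mem
      choose ε hε using fun j => (sel_conv (hzne j) (hx1 j).1 (hx1 j).2).2
      refine ⟨ε, fun j => (hε j).1, ?_⟩
      have hxeq : (((0:ℂ), J₁) : ℂ × (Fin n → ℂ)) = (0, fun j => sel n R 0 (ε j) j) := by
        rw [Prod.mk.injEq]
        exact ⟨rfl, funext fun j => (hε j).2⟩
      rw [← hxeq]
      exact hJ1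

theorem MC_pathConnected (hn : 2 ≤ n) (hR0 : 0 < R) (hR2 : R < 2) :
    IsPathConnected (MC n R) := by
  have hflip : ∀ (ε : Fin n → ℝ), (∀ k, ε k = 1 ∨ ε k = -1) → ∀ k : Fin n,
      JoinedIn (MC n R) (0, fun j => sel n R 0 (ε j) j)
        (0, fun j => sel n R 0 (Function.update ε k (-(ε k)) j) j) := by
    rcases le_or_gt R 1 with h | h
    · exact fun ε hε k => flip_B hn hR0 h hε k
    · exact fun ε hε k => flip_P hn h hR2 hε k
  refine ⟨(0, fun j => sel n R 0 1 j), base_mem hR0 hR2 (fun _ => Or.inl rfl), ?_⟩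
  intro y hy
  obtain ⟨ε, hε, hjy⟩ := reduce hn hR0 hR2 hy
  have hchain := chain hn hR0 hR2 hflip Finset.univ ε hε
    (fun k hk => absurd (Finset.mem_univ k) hk)
  exact hchain.symm.trans hjy.symm





/-- conversion map -/
def Φ (n : ℕ) : ℂ × (Fin n → ℂ) → (ℝ × ℝ) × (Fin n → ℝ × ℝ) :=
  fun z => ((z.1.re, z.1.im), fun k => ((z.2 k).re, (z.2 k).im))

lemma enorm2_pair (z w : ℂ) : enorm2 ((z.re, z.im) - (w.re, w.im)) = Complex.abs (z - w) := by
  rw [Complex.abs_apply, Complex.normSq_apply, enorm2]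
  rw [Prod.mk_sub_mk]
  simp only [Complex.sub_re, Complex.sub_im]
  ring_nf

lemma Bpt_eq (n : ℕ) (R : ℝ) (k : Fin n) : Bpt n R k = ((bc n R k).re, (bc n R k).im) := by
  rw [Bpt, bc, ek, θk]
  rw [Prod.mk.injEq]
  constructor
  · rw [Complex.re_ofReal_mul, Complex.exp_ofReal_mul_I_re]
  · rw [Complex.im_ofReal_mul, Complex.exp_ofReal_mul_I_im]

lemma image_eq (n : ℕ) (R : ℝ) : Φ n '' MC n R = MSpace n R := by
  ext x
  constructor
  · rintro ⟨z, hz, rfl⟩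
    intro k
    constructor
    · rw [Φ]; exact (enorm2_pair z.1 (z.2 k)).trans (hz k).1
    · rw [Φ, Bpt_eq]
      exact (enorm2_pair (z.2 k) (bc n R k)).trans (hz k).2
  · intro hx
    refine ⟨((Complex.ofReal x.1.1 + Complex.ofReal x.1.2 * Complex.I),
      fun k => (Complex.ofReal (x.2 k).1 + Complex.ofReal (x.2 k).2 * Complex.I)), ?_, ?_⟩
    · intro k
      constructor
      · have := (hx k).1
        rw [← this]
        rw [← enorm2_pair]
        congr 1 <;> simp
      · have := (hx k).2
        rw [← this, ← enorm2_pair, Bpt_eq]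
        congr 1 <;> simp
    · rw [Φ]
      refine Prod.ext ?_ (funext fun k => ?_) <;> simp
lemma continuous_Φ (n : ℕ) : Continuous (Φ n) := by
  unfold Φ
  refine Continuous.prodMk ?_ (continuous_pi fun k => ?_)
  · exact (Complex.continuous_re.comp continuous_fst).prodMk
      (Complex.continuous_im.comp continuous_fst)
  · exact ((Complex.continuous_re.comp ((continuous_apply k).comp continuous_snd))).prodMk
      ((Complex.continuous_im.comp ((continuous_apply k).comp continuous_snd)))


end Spider
end SpiderProof


theorem stmt6 (n : ℕ) (hn : 2 ≤ n) (R : ℝ) (hR0 : 0 < R) (hR2 : R < 2)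
    (hRne : R ≠ Rcrit n) :
    IsPathConnected (MSpace n R) := by
  rw [← Spider.image_eq n R]
  exact (Spider.MC_pathConnected hn hR0 hR2).image (Spider.continuous_Φ n)
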